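/- For a ≥ 7, the value of the irreducible character of S_{2a+4} indexed by β = (a+4, 6, 1^{a-6}) at the conjugacy class of cycle type (a, a-1, 4, 1) equals 0. -/

import Mathlib

def betaSet (l : List ℕ) : List ℕ :=
  (l.zipIdx.map Prod.swap).map (fun p => p.2 + (l.length - 1 - p.1))

def fromBeta (b : List ℕ) : List ℕ :=
  let s := List.insertionSort (· ≥ ·) b
  ((s.zipIdx.map Prod.swap).map (fun p => p.2 - (s.length - 1 - p.1))).filter (fun x => x ≠ 0)

def MN : List ℕ → List ℕ → ℤ
  | β, [] => if β = [] then 1 else 0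
  | β, q :: γ =>
      ((betaSet β).map (fun x =>
        if q ≤ x ∧ x - q ∉ betaSet β then
          (-1) ^ ((betaSet β).filter (fun y => x - q < y ∧ y < x)).length *
            MN (fromBeta ((x - q) :: (betaSet β).erase x)) γ
        else 0)).sum

def IsPartition (l : List ℕ) (m : ℕ) : Prop :=
  l.Pairwise (· ≥ ·) ∧ (∀ i ∈ l, 0 < i) ∧ l.sum = m

def conjugate (l : List ℕ) : List ℕ :=
  (List.range (l.foldr max 0)).map (fun i => (l.filter (fun p => i < p)).length)

/-! ### Auxiliary machinery -/

def enumFrom' (m : ℕ) (l : List ℕ) : List (ℕ × ℕ) := (l.zipIdx m).map Prod.swap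

lemma enumFrom'_cons (m x : ℕ) (l : List ℕ) :
    enumFrom' m (x :: l) = (m, x) :: enumFrom' (m+1) l := by
  simp [enumFrom']

/-- The descending list `[k, k-1, ..., 1]`. -/
def D (k : ℕ) : List ℕ := (List.range k).map (fun i => k - i)

lemma D_succ (k : ℕ) : D (k+1) = (k+1) :: D k := by
  simp only [D, List.range_succ_eq_map, List.map_cons, Nat.sub_zero, List.map_map]
  congr 1
  apply List.map_congr_left
  intro i _
  simp [Nat.succ_sub_succ]

lemma length_D (k : ℕ) : (D k).length = k := by simp [D]

lemma mem_D {k x : ℕ} : x ∈ D k ↔ 1 ≤ x ∧ x ≤ k := by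
  induction k with
  | zero => simp [D]; omega
  | succ k ih => rw [D_succ]; simp [ih]; omega

lemma sorted_D (k : ℕ) : (D k).Pairwise (· ≥ ·) := by
  induction k with
  | zero => simp [D]
  | succ k ih =>
    rw [D_succ, List.pairwise_cons]
    exact ⟨fun b hb => by have := mem_D.1 hb; omega, ih⟩

lemma aux1 (k : ℕ) : ∀ m c : ℕ, m + k = c + 1 →
    (enumFrom' m (List.replicate k 1)).map (fun p => p.2 + (c - p.1)) = D k := by
  induction k with
  | zero => intro m c _; simp [D, enumFrom']
  | succ k ih =>
    intro m c h
    rw [List.replicate_succ, enumFrom'_cons, List.map_cons, D_succ,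
      ih (m+1) c (by omega)]
    congr 1
    omega

lemma aux2 (k : ℕ) : ∀ m c : ℕ, m + k = c + 1 →
    (enumFrom' m (D k)).map (fun p => p.2 - (c - p.1)) = List.replicate k 1 := by
  induction k with
  | zero => intro m c _; simp [D, enumFrom']
  | succ k ih =>
    intro m c h
    rw [D_succ, enumFrom'_cons, List.map_cons, List.replicate_succ,
      ih (m+1) c (by omega)]
    congr 1
    omega

lemma aux3 (k : ℕ) : ∀ m c : ℕ, m + k = c →
    (enumFrom' m (D k ++ [0])).map (fun p => p.2 - (c - p.1)) = List.replicate (k+1) 0 := by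
  induction k with
  | zero =>
    intro m c h
    show [(0 : ℕ) - (c - m)] = [0]
    rw [Nat.zero_sub]
  | succ k ih =>
    intro m c h
    rw [D_succ, List.cons_append, enumFrom'_cons, List.map_cons,
      List.replicate_succ, ih (m+1) c (by omega)]
    congr 1
    omega

lemma betaSet_two (x y k : ℕ) :
    betaSet (x :: y :: List.replicate k 1) = (x + (k+1)) :: (y + k) :: D k := by
  have hlen : (x :: y :: List.replicate k 1).length = k + 2 := by simp
  unfold betaSet
  rw [hlen]
  show (enumFrom' 0 (x :: y :: List.replicate k 1)).map
      (fun p => p.2 + (k + 2 - 1 - p.1)) = _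
  rw [enumFrom'_cons, enumFrom'_cons, List.map_cons, List.map_cons,
    aux1 k 2 (k+2-1) (by omega)]
  congr 2 <;> omega

lemma betaSet_one (x : ℕ) : betaSet [x] = [x] := by
  simp [betaSet]

lemma sort_two (x y k : ℕ) (hxy : y < x) (hy : k < y) :
    List.insertionSort (· ≥ ·) (y :: x :: D k) = x :: y :: D k := by
  refine List.Perm.eq_of_pairwise (fun a b _ _ h1 h2 => le_antisymm h2 h1)
    (List.pairwise_insertionSort _ _) ?_
    ((List.perm_insertionSort _ _).trans (List.Perm.swap x y (D k)))
  rw [List.pairwise_cons, List.pairwise_cons]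
  refine ⟨?_, ?_, sorted_D k⟩
  · intro b hb
    rw [List.mem_cons] at hb
    rcases hb with h | h
    · omega
    · have := mem_D.1 h; omega
  · intro b hb; have := mem_D.1 hb; omega

lemma sorted_D_append_zero (k : ℕ) : (D k ++ [0]).Pairwise (· ≥ ·) := by
  rw [List.pairwise_append]
  refine ⟨sorted_D k, by simp, ?_⟩
  intro a _ b hb
  simp at hb
  omega

lemma sort_zero (x k : ℕ) (hx : k < x) :
    List.insertionSort (· ≥ ·) (0 :: x :: D k) = x :: (D k ++ [0]) := by
  refine List.Perm.eq_of_pairwise (fun a b _ _ h1 h2 => le_antisymm h2 h1)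
    (List.pairwise_insertionSort _ _) ?_
    (((List.perm_insertionSort _ _).trans (List.Perm.swap x 0 (D k))).trans
      ((List.perm_append_singleton 0 (D k)).symm.cons x))
  rw [List.pairwise_cons]
  refine ⟨?_, sorted_D_append_zero k⟩
  intro b hb
  rcases List.mem_append.1 hb with h | h
  · have := mem_D.1 h; omega
  · simp at h; omega

lemma fromBeta_two (x y k : ℕ) (hxy : y < x) (hy : k < y) :
    fromBeta (y :: x :: D k) = (x - (k+1)) :: (y - k) :: List.replicate k 1 := by
  unfold fromBeta
  rw [sort_two x y k hxy hy]
  show ((enumFrom' 0 (x :: y :: D k)).map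
      (fun p => p.2 - ((x :: y :: D k).length - 1 - p.1))).filter (fun z => z ≠ 0) = _
  have hlen : (x :: y :: D k).length = k + 2 := by simp [length_D]
  rw [hlen]
  rw [enumFrom'_cons, enumFrom'_cons, List.map_cons, List.map_cons,
    aux2 k 2 (k+2-1) (by omega)]
  have h1 : x - (k + 2 - 1 - 0) = x - (k+1) := by omega
  have h2 : y - (k + 2 - 1 - 1) = y - k := by omega
  rw [h1, h2, List.filter_cons, List.filter_cons]
  rw [if_pos (by simp only [decide_eq_true_eq]; omega)]
  rw [if_pos (by simp only [decide_eq_true_eq]; omega)]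
  congr 1
  congr 1
  simp [List.filter_replicate]

lemma fromBeta_zero (x k : ℕ) (hx : k + 1 < x) :
    fromBeta (0 :: x :: D k) = [x - (k+1)] := by
  unfold fromBeta
  rw [sort_zero x k (by omega)]
  show ((enumFrom' 0 (x :: (D k ++ [0]))).map
      (fun p => p.2 - ((x :: (D k ++ [0])).length - 1 - p.1))).filter (fun z => z ≠ 0) = _
  have hlen : (x :: (D k ++ [0])).length = k + 2 := by simp [length_D]
  rw [hlen]
  rw [enumFrom'_cons, List.map_cons, aux3 k 1 (k+2-1) (by omega)]
  have h1 : x - (k + 2 - 1 - 0) = x - (k+1) := by omega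
  rw [h1, List.filter_cons]
  rw [if_pos (by simp only [decide_eq_true_eq]; omega)]
  simp [List.filter_replicate]

lemma fromBeta_single (x : ℕ) (hx : x ≠ 0) : fromBeta [x] = [x] := by
  unfold fromBeta
  have : List.insertionSort (· ≥ ·) [x] = [x] := rfl
  rw [this]
  simp [hx]

lemma sum_map_D_zero {k : ℕ} {f : ℕ → ℤ} (h : ∀ x ∈ D k, f x = 0) :
    ((D k).map f).sum = 0 := by
  apply List.sum_eq_zero
  intro z hz
  obtain ⟨x, hx, rfl⟩ := List.mem_map.1 hz
  exact h x hx

/-! ### The three MN computation steps -/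

lemma step2b (k : ℕ) (γ : List ℕ) : MN [k+11] ((k+6) :: γ) = MN [5] γ := by
  rw [MN]
  rw [betaSet_one]
  simp only [List.map_cons, List.map_nil, List.sum_cons, List.sum_nil, add_zero]
  have hcond : k + 6 ≤ k + 11 ∧ k + 11 - (k + 6) ∉ [k + 11] := by
    constructor
    · omega
    · simp only [List.mem_cons, List.not_mem_nil, or_false]; omega
  rw [if_pos hcond]
  have hfil : [k+11].filter (fun y => k + 11 - (k+6) < y ∧ y < k + 11) = [] := by
    rw [List.filter_cons, if_neg (by simp only [decide_eq_true_eq]; omega)]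
    rfl
  rw [hfil]
  have h5 : k + 11 - (k + 6) = 5 := by omega
  rw [h5, List.erase_cons_head]
  rw [fromBeta_single 5 (by omega)]
  simp

lemma step2a (k : ℕ) (γ : List ℕ) :
    MN (5 :: 5 :: List.replicate (k+1) 1) ((k+6) :: γ) = (-1)^(k+1) * MN [5] γ := by
  rw [MN]
  rw [betaSet_two]
  have h1 : 5 + (k + 1 + 1) = k + 7 := by omega
  have h2 : 5 + (k + 1) = k + 6 := by omega
  rw [h1, h2]
  simp only [List.map_cons, List.sum_cons]
  -- first entry: k+7, hook removal lands on 1 ∈ D (k+1), so 0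
  have hc1 : ¬(k + 6 ≤ k + 7 ∧ k + 7 - (k + 6) ∉ (k+7) :: (k+6) :: D (k+1)) := by
    rintro ⟨-, h⟩
    apply h
    have h17 : k + 7 - (k + 6) = 1 := by omega
    rw [h17]
    exact List.mem_cons_of_mem _ (List.mem_cons_of_mem _ (mem_D.2 ⟨le_refl 1, by omega⟩))
  rw [if_neg hc1]
  -- second entry: k+6, valid
  have hc2 : (k + 6 ≤ k + 6 ∧ k + 6 - (k + 6) ∉ (k+7) :: (k+6) :: D (k+1)) := by
    refine ⟨le_refl _, ?_⟩
    intro h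
    rw [List.mem_cons, List.mem_cons] at h
    rcases h with h | h | h
    · omega
    · omega
    · have := mem_D.1 h; omega
  rw [if_pos hc2]
  -- the filter for the second entry is D (k+1)
  have hsub : k + 6 - (k + 6) = 0 := by omega
  have hfil : ((k+7) :: (k+6) :: D (k+1)).filter
      (fun y => k + 6 - (k+6) < y ∧ y < k + 6) = D (k+1) := by
    rw [List.filter_cons, List.filter_cons]
    rw [if_neg (by simp only [decide_eq_true_eq]; omega)]
    rw [if_neg (by simp only [decide_eq_true_eq]; omega)]
    apply List.filter_eq_self.2
    intro b hb
    have := mem_D.1 hb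
    simp only [decide_eq_true_eq]
    omega
  rw [hfil, length_D]
  -- erase
  have herase : ((k+7) :: (k+6) :: D (k+1)).erase (k+6) = (k+7) :: D (k+1) := by
    rw [List.erase_cons_tail (by simp only [beq_iff_eq]; omega), List.erase_cons_head]
  rw [hsub, herase, fromBeta_zero (k+7) (k+1) (by omega)]
  have h5 : k + 7 - (k + 1 + 1) = 5 := by omega
  rw [h5]
  -- remaining terms are zero
  have hzero : ((D (k+1)).map (fun x =>
      if k + 6 ≤ x ∧ x - (k+6) ∉ (k+7) :: (k+6) :: D (k+1) then
        (-1 : ℤ) ^ (((k+7) :: (k+6) :: D (k+1)).filter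
          (fun y => x - (k+6) < y ∧ y < x)).length *
          MN (fromBeta ((x - (k+6)) :: ((k+7) :: (k+6) :: D (k+1)).erase x)) γ
      else 0)).sum = 0 := by
    apply sum_map_D_zero
    intro x hx
    have := mem_D.1 hx
    rw [if_neg]
    rintro ⟨h, -⟩
    omega
  rw [hzero]
  ring

lemma step1 (k : ℕ) (γ : List ℕ) :
    MN ((k+11) :: 6 :: List.replicate (k+1) 1) ((k+7) :: γ) =
      -(MN (5 :: 5 :: List.replicate (k+1) 1) γ) + (-1)^(k+1) * MN [k+11] γ := by
  rw [MN]
  rw [betaSet_two]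
  have h1 : k + 11 + (k + 1 + 1) = 2*k + 13 := by omega
  have h2 : 6 + (k + 1) = k + 7 := by omega
  rw [h1, h2]
  simp only [List.map_cons, List.sum_cons]
  -- first entry: 2k+13, valid
  have hc1 : (k + 7 ≤ 2*k + 13 ∧ 2*k + 13 - (k + 7) ∉ (2*k+13) :: (k+7) :: D (k+1)) := by
    refine ⟨by omega, ?_⟩
    intro h
    rw [List.mem_cons, List.mem_cons] at h
    rcases h with h | h | h
    · omega
    · omega
    · have := mem_D.1 h; omega
  rw [if_pos hc1]
  -- its filter is [k+7]
  have hfil1 : ((2*k+13) :: (k+7) :: D (k+1)).filter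
      (fun y => 2*k + 13 - (k+7) < y ∧ y < 2*k + 13) = [k+7] := by
    rw [List.filter_cons, List.filter_cons]
    rw [if_neg (by simp only [decide_eq_true_eq]; omega)]
    rw [if_pos (by simp only [decide_eq_true_eq]; omega)]
    have hnil : (D (k+1)).filter (fun y => decide (2*k + 13 - (k+7) < y ∧ y < 2*k + 13)) = [] := by
      apply List.filter_eq_nil_iff.2
      intro b hb
      have := mem_D.1 hb
      simp only [decide_eq_true_eq]
      omega
    rw [hnil]
  rw [hfil1, show ([k+7] : List ℕ).length = 1 from rfl]
  have herase1 : ((2*k+13) :: (k+7) :: D (k+1)).erase (2*k+13) = (k+7) :: D (k+1) := by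
    rw [List.erase_cons_head]
  rw [herase1]
  have hsub1 : 2*k + 13 - (k + 7) = k + 6 := by omega
  rw [hsub1, fromBeta_two (k+7) (k+6) (k+1) (by omega) (by omega)]
  have e5 : k + 7 - (k + 1 + 1) = 5 := by omega
  have e5' : k + 6 - (k + 1) = 5 := by omega
  rw [e5, e5']
  -- second entry: k+7, valid
  have hc2 : (k + 7 ≤ k + 7 ∧ k + 7 - (k + 7) ∉ (2*k+13) :: (k+7) :: D (k+1)) := by
    refine ⟨le_refl _, ?_⟩
    intro h
    rw [List.mem_cons, List.mem_cons] at h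
    rcases h with h | h | h
    · omega
    · omega
    · have := mem_D.1 h; omega
  rw [if_pos hc2]
  have hfil2 : ((2*k+13) :: (k+7) :: D (k+1)).filter
      (fun y => k + 7 - (k+7) < y ∧ y < k + 7) = D (k+1) := by
    rw [List.filter_cons, List.filter_cons]
    rw [if_neg (by simp only [decide_eq_true_eq]; omega)]
    rw [if_neg (by simp only [decide_eq_true_eq]; omega)]
    apply List.filter_eq_self.2
    intro b hb
    have := mem_D.1 hb
    simp only [decide_eq_true_eq]
    omega
  rw [hfil2, length_D]
  have herase2 : ((2*k+13) :: (k+7) :: D (k+1)).erase (k+7) = (2*k+13) :: D (k+1) := by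
    rw [List.erase_cons_tail (by simp only [beq_iff_eq]; omega), List.erase_cons_head]
  have hsub2 : k + 7 - (k + 7) = 0 := by omega
  rw [hsub2, herase2, fromBeta_zero (2*k+13) (k+1) (by omega)]
  have e11 : 2*k + 13 - (k + 1 + 1) = k + 11 := by omega
  rw [e11]
  -- remaining terms are zero
  have hzero : ((D (k+1)).map (fun x =>
      if k + 7 ≤ x ∧ x - (k+7) ∉ (2*k+13) :: (k+7) :: D (k+1) then
        (-1 : ℤ) ^ (((2*k+13) :: (k+7) :: D (k+1)).filter
          (fun y => x - (k+7) < y ∧ y < x)).length *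
          MN (fromBeta ((x - (k+7)) :: ((2*k+13) :: (k+7) :: D (k+1)).erase x)) γ
      else 0)).sum = 0 := by
    apply sum_map_D_zero
    intro x hx
    have := mem_D.1 hx
    rw [if_neg]
    rintro ⟨h, -⟩
    omega
  rw [hzero]
  ring

/-- For `a ≥ 7`, the irreducible character of `S_{2a+4}` indexed by
`β = (a+4, 6, 1^{a-6})` vanishes at the class of cycle type `(a, a-1, 4, 1)`. -/
theorem stmt_10 (a : ℕ) (ha : 7 ≤ a) :
    MN ((a + 4) :: 6 :: List.replicate (a - 6) 1) [a, a - 1, 4, 1] = 0 := by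
  obtain ⟨k, rfl⟩ : ∃ k, a = k + 7 := ⟨a - 7, by omega⟩
  have e1 : k + 7 + 4 = k + 11 := by omega
  have e2 : k + 7 - 6 = k + 1 := by omega
  have e3 : k + 7 - 1 = k + 6 := by omega
  rw [e1, e2, e3]
  rw [show ([k+7, k+6, 4, 1] : List ℕ) = (k+7) :: [k+6, 4, 1] from rfl]
  rw [step1 k [k+6, 4, 1]]
  rw [show ([k+6, 4, 1] : List ℕ) = (k+6) :: [4, 1] from rfl]
  rw [step2a k [4, 1], step2b k [4, 1]]
  ring
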